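/- Any finite principal submatrix of the Hilbert matrix H[r,s] = 1/(r+s-1) (r,s ≥ 1) has spectral norm at most π. -/

import Mathlib

open Real Set intervalIntegral MeasureTheory

lemma hilb_midpt (a u v : ℝ) (ha : 0 < a) (hu : 0 < u) (hv : 0 < v) :
    ((((u+v)/2) + a) * Real.sqrt ((u+v)/2))⁻¹ ≤
      (((u + a) * Real.sqrt u)⁻¹ + ((v + a) * Real.sqrt v)⁻¹) / 2 := by
  set m : ℝ := (u+v)/2 with hm
  have hmpos : 0 < m := by positivity
  have hsu := Real.sqrt_pos.2 hu
  have hsv := Real.sqrt_pos.2 hv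
  have hsm := Real.sqrt_pos.2 hmpos
  set fu : ℝ := ((u + a) * Real.sqrt u)⁻¹ with hfu
  set fv : ℝ := ((v + a) * Real.sqrt v)⁻¹ with hfv
  set fm : ℝ := ((m + a) * Real.sqrt m)⁻¹ with hfm
  have hfup : 0 < fu := by positivity
  have hfvp : 0 < fv := by positivity
  have hfmp : 0 < fm := by positivity
  have hsusv : Real.sqrt u * Real.sqrt v ≤ m := by
    rw [← Real.sqrt_mul hu.le]
    calc Real.sqrt (u*v) ≤ Real.sqrt (m^2) := by
          apply Real.sqrt_le_sqrt; nlinarith [sq_nonneg (u - v)]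
      _ = m := Real.sqrt_sq hmpos.le
  have hsq : fm^2 ≤ fu * fv := by
    rw [hfm, hfu, hfv, ← mul_inv, inv_pow]
    apply inv_anti₀ (by positivity)
    have h1 : ((m + a) * Real.sqrt m)^2 = (m+a)^2 * m := by
      rw [mul_pow, Real.sq_sqrt hmpos.le]
    rw [h1]
    have hQ : (u+a)*(v+a) ≤ (m+a)^2 := by rw [hm]; nlinarith [sq_nonneg (u-v)]
    calc (u+a) * Real.sqrt u * ((v+a) * Real.sqrt v)
        = ((u+a)*(v+a)) * (Real.sqrt u * Real.sqrt v) := by ring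
      _ ≤ (m+a)^2 * m := mul_le_mul hQ hsusv (by positivity) (by positivity)
  have h2 : fm ≤ Real.sqrt (fu * fv) := by
    calc fm = Real.sqrt (fm^2) := (Real.sqrt_sq hfmp.le).symm
      _ ≤ Real.sqrt (fu * fv) := Real.sqrt_le_sqrt hsq
  calc fm ≤ Real.sqrt (fu * fv) := h2
    _ ≤ (fu + fv) / 2 := by
        rw [Real.sqrt_mul hfup.le]
        nlinarith [sq_nonneg (Real.sqrt fu - Real.sqrt fv), Real.sq_sqrt hfup.le, Real.sq_sqrt hfvp.le]

lemma hilb_deriv (a : ℝ) (ha : 0 < a) (x : ℝ) (hx : 0 < x) :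
    HasDerivAt (fun y => 2 / Real.sqrt a * Real.arctan (Real.sqrt y / Real.sqrt a))
      (((x + a) * Real.sqrt x)⁻¹) x := by
  have hsa : 0 < Real.sqrt a := Real.sqrt_pos.2 ha
  have hsx : 0 < Real.sqrt x := Real.sqrt_pos.2 hx
  have h1 : HasDerivAt Real.sqrt (1 / (2 * Real.sqrt x)) x := Real.hasDerivAt_sqrt hx.ne'
  have h2 : HasDerivAt (fun y => Real.sqrt y / Real.sqrt a)
      (1 / (2 * Real.sqrt x) / Real.sqrt a) x := h1.div_const _
  have h3 : HasDerivAt (fun y => Real.arctan (Real.sqrt y / Real.sqrt a))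
      ((1 / (1 + (Real.sqrt x / Real.sqrt a) ^ 2)) * (1 / (2 * Real.sqrt x) / Real.sqrt a)) x :=
    (Real.hasDerivAt_arctan _).comp x h2
  have h4 := h3.const_mul (2 / Real.sqrt a)
  refine h4.congr_deriv ?_
  symm
  have hx2 : Real.sqrt x ^ 2 = x := Real.sq_sqrt hx.le
  have ha2 : Real.sqrt a ^ 2 = a := Real.sq_sqrt ha.le
  have hd : 1 + (Real.sqrt x / Real.sqrt a) ^ 2 > 0 := by positivity
  field_simp
  linear_combination ha2 + hx2

lemma hilb_contF (a : ℝ) : Continuous (fun y => 2 / Real.sqrt a * Real.arctan (Real.sqrt y / Real.sqrt a)) := by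
  exact continuous_const.mul (Real.continuous_arctan.comp (Real.continuous_sqrt.div_const _))

lemma hilb_intble (a s : ℝ) (ha : 0 < a) (hs : 0 ≤ s) :
    IntervalIntegrable (fun x => ((x + a) * Real.sqrt x)⁻¹) MeasureTheory.volume s (s+1) := by
  apply intervalIntegrable_deriv_of_nonneg ((hilb_contF a).continuousOn)
  · intro x hx
    rw [min_eq_left (by linarith), max_eq_right (by linarith)] at hx
    exact hilb_deriv a ha x (lt_of_le_of_lt hs hx.1)
  · intro x hx
    rw [min_eq_left (by linarith), max_eq_right (by linarith)] at hx
    have hx0 : 0 < x := lt_of_le_of_lt hs hx.1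
    positivity

lemma hilb_integral (a s : ℝ) (ha : 0 < a) (hs : 0 ≤ s) :
    ∫ x in s..s+1, ((x + a) * Real.sqrt x)⁻¹
      = 2 / Real.sqrt a * Real.arctan (Real.sqrt (s+1) / Real.sqrt a)
        - 2 / Real.sqrt a * Real.arctan (Real.sqrt s / Real.sqrt a) := by
  apply integral_eq_sub_of_hasDerivAt_of_le (by linarith) ((hilb_contF a).continuousOn)
  · intro x hx
    exact hilb_deriv a ha x (lt_of_le_of_lt hs hx.1)
  · exact hilb_intble a s ha hs

lemma hilb_midpt_integral (a s : ℝ) (ha : 0 < a) (hs : 0 ≤ s) :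
    (((s + 1/2) + a) * Real.sqrt (s + 1/2))⁻¹ ≤ ∫ x in s..s+1, ((x + a) * Real.sqrt x)⁻¹ := by
  set f : ℝ → ℝ := fun x => ((x + a) * Real.sqrt x)⁻¹ with hf
  have hint := hilb_intble a s ha hs
  have hint2 : IntervalIntegrable (fun x => f (2*s+1 - x)) volume s (s+1) := by
    have := hint.comp_sub_left (2*s+1)
    have e1 : 2*s+1 - s = s+1 := by ring
    have e2 : 2*s+1 - (s+1) = s := by ring
    rw [e1, e2] at this
    exact this.symm
  have hint3 : IntervalIntegrable (fun x => (f x + f (2*s+1 - x)) / 2) volume s (s+1) :=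
    (hint.add hint2).div_const 2
  have hmono : (∫ x in s..s+1, f (s+1/2)) ≤ ∫ x in s..s+1, (f x + f (2*s+1 - x)) / 2 := by
    apply integral_mono_ae_restrict (by linarith) intervalIntegrable_const hint3
    have h1 : ∀ᵐ (x : ℝ), x ≠ s := by
      rw [MeasureTheory.ae_iff]
      simp only [not_not, Set.setOf_eq_eq_singleton]
      exact measure_singleton s
    have h2 : ∀ᵐ (x : ℝ), x ≠ s + 1 := by
      rw [MeasureTheory.ae_iff]
      simp only [not_not, Set.setOf_eq_eq_singleton]
      exact measure_singleton (s+1)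
    filter_upwards [ae_restrict_mem measurableSet_Icc, ae_restrict_of_ae h1,
      ae_restrict_of_ae h2] with x hx hxs hxs1
    have hx1 : s < x := lt_of_le_of_ne hx.1 (Ne.symm hxs)
    have hx2 : x < s + 1 := lt_of_le_of_ne hx.2 hxs1
    have hu : 0 < x := lt_of_le_of_lt hs hx1
    have hv : 0 < 2*s+1 - x := by linarith
    have := hilb_midpt a x (2*s+1 - x) ha hu hv
    have e : (x + (2*s+1 - x))/2 = s + 1/2 := by ring
    rw [e] at this
    simpa [hf] using this
  have hrefl : (∫ x in s..s+1, f (2*s+1 - x)) = ∫ x in s..s+1, f x := by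
    have := intervalIntegral.integral_comp_sub_left (a := s) (b := s+1) f (2*s+1)
    have e1 : 2*s+1 - s = s+1 := by ring
    have e2 : 2*s+1 - (s+1) = s := by ring
    rw [e1, e2] at this
    exact this
  have hconst : (∫ x in s..s+1, f (s+1/2)) = f (s+1/2) := by
    simp
  have hhalf : (∫ x in s..s+1, (f x + f (2*s+1 - x)) / 2) = ∫ x in s..s+1, f x := by
    rw [intervalIntegral.integral_div, intervalIntegral.integral_add hint hint2, hrefl]
    ring
  calc f (s+1/2) = ∫ x in s..s+1, f (s+1/2) := hconst.symm
    _ ≤ ∫ x in s..s+1, (f x + f (2*s+1 - x)) / 2 := hmono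
    _ = ∫ x in s..s+1, f x := hhalf

lemma hilb_key (a : ℝ) (ha : 0 < a) (n : ℕ) :
    ∑ s ∈ Finset.range n, ((((s:ℝ) + 1/2) + a) * Real.sqrt ((s:ℝ) + 1/2))⁻¹
      ≤ Real.pi * (Real.sqrt a)⁻¹ := by
  set F : ℕ → ℝ := fun k => 2 / Real.sqrt a * Real.arctan (Real.sqrt (k:ℝ) / Real.sqrt a) with hF
  have hsa : 0 < Real.sqrt a := Real.sqrt_pos.2 ha
  have step : ∀ s ∈ Finset.range n,
      ((((s:ℝ) + 1/2) + a) * Real.sqrt ((s:ℝ) + 1/2))⁻¹ ≤ F (s+1) - F s := by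
    intro s _
    have h1 := hilb_midpt_integral a (s:ℝ) ha (Nat.cast_nonneg s)
    have h2 := hilb_integral a (s:ℝ) ha (Nat.cast_nonneg s)
    rw [h2] at h1
    simpa [hF, Nat.cast_add] using h1
  calc ∑ s ∈ Finset.range n, ((((s:ℝ) + 1/2) + a) * Real.sqrt ((s:ℝ) + 1/2))⁻¹
      ≤ ∑ s ∈ Finset.range n, (F (s+1) - F s) := Finset.sum_le_sum step
    _ = F n - F 0 := Finset.sum_range_sub F n
    _ ≤ Real.pi * (Real.sqrt a)⁻¹ := by
        have h0 : F 0 = 0 := by simp [hF]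
        rw [h0, sub_zero, hF]
        have := (Real.arctan_lt_pi_div_two (Real.sqrt (n:ℝ) / Real.sqrt a)).le
        calc 2 / Real.sqrt a * Real.arctan (Real.sqrt (n:ℝ) / Real.sqrt a)
            ≤ 2 / Real.sqrt a * (Real.pi / 2) := by
              apply mul_le_mul_of_nonneg_left this (by positivity)
          _ = Real.pi * (Real.sqrt a)⁻¹ := by field_simp

lemma hilb_row (n : ℕ) (H : Matrix (Fin n) (Fin n) ℝ)
    (hH : ∀ r s, H r s = 1 / ((r : ℝ) + (s : ℝ) + 1)) (r : Fin n) :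
    ∑ s : Fin n, H r s * (Real.sqrt ((s:ℝ) + 1/2))⁻¹
      ≤ Real.pi * (Real.sqrt ((r:ℝ) + 1/2))⁻¹ := by
  have ha : (0:ℝ) < (r:ℝ) + 1/2 := by positivity
  have := hilb_key ((r:ℝ) + 1/2) ha n
  calc ∑ s : Fin n, H r s * (Real.sqrt ((s:ℝ) + 1/2))⁻¹
      = ∑ s ∈ Finset.range n, ((((s:ℝ) + 1/2) + ((r:ℝ) + 1/2)) * Real.sqrt ((s:ℝ) + 1/2))⁻¹ := by
        rw [← Fin.sum_univ_eq_sum_range (fun s => ((((s:ℝ) + 1/2) + ((r:ℝ) + 1/2)) * Real.sqrt ((s:ℝ) + 1/2))⁻¹) n]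
        apply Finset.sum_congr rfl
        intro s _
        rw [hH, mul_inv]
        congr 1
        rw [one_div]
        congr 1
        ring
    _ ≤ Real.pi * (Real.sqrt ((r:ℝ) + 1/2))⁻¹ := this

/-- Spectral norm (largest singular value) of a real matrix. -/
noncomputable def specNorm {n : Type*} [Fintype n] [DecidableEq n] (M : Matrix n n ℝ) : ℝ :=
  ‖Matrix.toEuclideanCLM (𝕜 := ℝ) M‖

/-- Any finite principal section of the Hilbert matrix `[1/(r+s-1)]_{r,s ≥ 1}`
has spectral norm at most `π`.  (Here rows and columns are indexed from 0,
so the entry is `1/(r+s+1)`.) -/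
theorem stmt_8 (n : ℕ) (H : Matrix (Fin n) (Fin n) ℝ)
    (hH : ∀ r s, H r s = 1 / ((r : ℝ) + (s : ℝ) + 1)) :
    specNorm H ≤ Real.pi := by
  rw [specNorm]
  refine ContinuousLinearMap.opNorm_le_bound _ Real.pi_pos.le (fun x => ?_)
  set p : Fin n → ℝ := fun s => (Real.sqrt ((s:ℝ) + 1/2))⁻¹ with hp
  have hppos : ∀ s, 0 < p s := fun s => by positivity
  have hHpos : ∀ r s, 0 < H r s := by
    intro r s; rw [hH]; positivity
  have hHsymm : ∀ r s, H r s = H s r := by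
    intro r s; rw [hH, hH]; ring_nf
  have hrow : ∀ r, ∑ s, H r s * p s ≤ Real.pi * p r := fun r => hilb_row n H hH r
  -- key quadratic estimate
  have key : ∑ r, (∑ s, H r s * x s)^2 ≤ Real.pi^2 * ∑ s, (x s)^2 := by
    have step1 : ∀ r, (∑ s, H r s * x s)^2 ≤ (Real.pi * p r) * ∑ s, H r s * (x s)^2 / p s := by
      intro r
      have cs : (∑ s, H r s * |x s|)^2 ≤ (∑ s, H r s * p s) * ∑ s, H r s * (x s)^2 / p s := by
        apply Finset.sum_sq_le_sum_mul_sum_of_sq_eq_mul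
        · intro s _; exact (mul_pos (hHpos r s) (hppos s)).le
        · intro s _
          exact div_nonneg (mul_nonneg (hHpos r s).le (sq_nonneg _)) (hppos s).le
        · intro s _
          rw [mul_pow, sq_abs]
          field_simp [(hppos s).ne']
      have habs : (∑ s, H r s * x s)^2 ≤ (∑ s, H r s * |x s|)^2 := by
        apply sq_le_sq'
        · rw [← Finset.sum_neg_distrib]
          apply Finset.sum_le_sum
          intro s _
          rw [← mul_neg]
          exact mul_le_mul_of_nonneg_left (neg_abs_le _) (hHpos r s).le
        · apply Finset.sum_le_sum
          intro s _
          exact mul_le_mul_of_nonneg_left (le_abs_self _) (hHpos r s).le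
      calc (∑ s, H r s * x s)^2 ≤ (∑ s, H r s * |x s|)^2 := habs
        _ ≤ (∑ s, H r s * p s) * ∑ s, H r s * (x s)^2 / p s := cs
        _ ≤ (Real.pi * p r) * ∑ s, H r s * (x s)^2 / p s := by
            apply mul_le_mul_of_nonneg_right (hrow r)
            apply Finset.sum_nonneg; intro s _
            exact div_nonneg (mul_nonneg (hHpos r s).le (sq_nonneg _)) (hppos s).le
    calc ∑ r, (∑ s, H r s * x s)^2
        ≤ ∑ r, (Real.pi * p r) * ∑ s, H r s * (x s)^2 / p s :=
          Finset.sum_le_sum (fun r _ => step1 r)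
      _ = Real.pi * ∑ s, ((x s)^2 / p s) * ∑ r, H s r * p r := by
          simp_rw [Finset.mul_sum]
          rw [Finset.sum_comm]
          apply Finset.sum_congr rfl
          intro s _
          apply Finset.sum_congr rfl
          intro r _
          rw [hHsymm s r]
          ring
      _ ≤ Real.pi * ∑ s, ((x s)^2 / p s) * (Real.pi * p s) := by
          apply mul_le_mul_of_nonneg_left _ Real.pi_pos.le
          apply Finset.sum_le_sum
          intro s _
          exact mul_le_mul_of_nonneg_left (hrow s) (by positivity)
      _ = Real.pi^2 * ∑ s, (x s)^2 := by
          rw [Finset.mul_sum, Finset.mul_sum]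
          apply Finset.sum_congr rfl
          intro s _
          field_simp [(hppos s).ne']
  -- conclude
  have hTx : ∀ r, (Matrix.toEuclideanCLM (𝕜 := ℝ) H x) r = ∑ s, H r s * x s := fun r => rfl
  rw [EuclideanSpace.norm_eq, EuclideanSpace.norm_eq]
  have e1 : ∑ r, ‖(Matrix.toEuclideanCLM (𝕜 := ℝ) H x) r‖^2 = ∑ r, (∑ s, H r s * x s)^2 := by
    apply Finset.sum_congr rfl
    intro r _
    rw [hTx, Real.norm_eq_abs, sq_abs]
  have e2 : ∑ s, ‖x s‖^2 = ∑ s, (x s)^2 := by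
    apply Finset.sum_congr rfl
    intro s _
    rw [Real.norm_eq_abs, sq_abs]
  rw [e1, e2]
  calc Real.sqrt (∑ r, (∑ s, H r s * x s)^2) ≤ Real.sqrt (Real.pi^2 * ∑ s, (x s)^2) :=
        Real.sqrt_le_sqrt key
    _ = Real.pi * Real.sqrt (∑ s, (x s)^2) := by
        rw [Real.sqrt_mul (by positivity), Real.sqrt_sq Real.pi_pos.le]
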